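/- Let K, M be n×n real symmetric positive semidefinite matrices, ω > 0, λ̲ = ω², and suppose S := K - λ̲M is positive semidefinite. Let Q be an n×q matrix with range(Q) ⊆ range(S), let r be a unit eigenvector of A := QᵀS†Q associated with its largest eigenvalue d_R, assume d_R > 0, and set f := Qr and u := S†f. Then u ≠ 0 and Ku = λ̲(M + (1/(λ̲ d_R)) QQᵀ)u, i.e., u is an eigenvector of the augmented generalized eigenvalue problem with eigenvalue λ̲. -/
import Mathlib


open Matrix

def IsMoorePenrose {m n : ℕ} (A : Matrix (Fin m) (Fin n) ℝ)
    (B : Matrix (Fin n) (Fin m) ℝ) : Prop :=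
  A * B * A = A ∧ B * A * B = B ∧ (A * B)ᵀ = A * B ∧ (B * A)ᵀ = B * A

def matRange {m n : ℕ} (A : Matrix (Fin m) (Fin n) ℝ) : Set (Fin m → ℝ) :=
  {y | ∃ x, A.mulVec x = y}

/-- Displacement–eigenmode relation: the worst-case displacement `u = S†(Qr)` is a
nonzero eigenvector of `K w = λ̲ (M + (1/(λ̲ d_R)) QQᵀ) w`. -/
theorem displacement_eigenmode_relation {n q : ℕ}
    (K M : Matrix (Fin n) (Fin n) ℝ) (Q : Matrix (Fin n) (Fin q) ℝ)
    (Sdag : Matrix (Fin n) (Fin n) ℝ) (ω lam dR : ℝ) (r : Fin q → ℝ)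
    (hK : K.PosSemidef) (hM : M.PosSemidef) (hω : 0 < ω) (hlam : lam = ω ^ 2)
    (hS : (K - lam • M).PosSemidef)
    (hSdag : IsMoorePenrose (K - lam • M) Sdag)
    (hQ : matRange Q ⊆ matRange (K - lam • M))
    (hr_unit : ∑ i, (r i) ^ 2 = 1)
    (hr_eig : (Qᵀ * Sdag * Q).mulVec r = dR • r)
    (hmax : ∀ (ν : ℝ) (v : Fin q → ℝ), v ≠ 0 →
      (Qᵀ * Sdag * Q).mulVec v = ν • v → ν ≤ dR)
    (hdR : 0 < dR) :
    Sdag.mulVec (Q.mulVec r) ≠ 0 ∧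
      K.mulVec (Sdag.mulVec (Q.mulVec r)) =
        lam • ((M + (1 / (lam * dR)) • (Q * Qᵀ)).mulVec (Sdag.mulVec (Q.mulVec r))) := by
  obtain ⟨h1, h2, h3, h4⟩ := hSdag
  set S := K - lam • M with hSdef
  set u := Sdag.mulVec (Q.mulVec r) with hu
  have hlam0 : lam ≠ 0 := by rw [hlam]; positivity
  have hr0 : r ≠ 0 := by
    intro h
    rw [h] at hr_unit
    simp at hr_unit
  have hQtu : Qᵀ.mulVec u = dR • r := by
    rw [hu, Matrix.mulVec_mulVec, Matrix.mulVec_mulVec]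
    exact hr_eig
  have hune : u ≠ 0 := by
    intro h
    rw [h, Matrix.mulVec_zero] at hQtu
    have : r = 0 := by
      have := hQtu.symm
      rwa [smul_eq_zero_iff_right (ne_of_gt hdR)] at this
    exact hr0 this
  refine ⟨hune, ?_⟩
  obtain ⟨x, hx⟩ := hQ ⟨r, rfl⟩
  have hSu : S.mulVec u = Q.mulVec r := by
    calc S.mulVec u = (S * Sdag * S).mulVec x := by
          rw [hu, ← hx, Matrix.mulVec_mulVec, Matrix.mulVec_mulVec]
      _ = Q.mulVec r := by rw [h1, hx]
  have hKu : K.mulVec u = Q.mulVec r + lam • M.mulVec u := by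
    have : S.mulVec u = K.mulVec u - lam • M.mulVec u := by
      rw [hSdef, Matrix.sub_mulVec, Matrix.smul_mulVec]
    rw [this] at hSu
    linear_combination (norm := module) hSu
  rw [hKu, Matrix.add_mulVec, Matrix.smul_mulVec, ← Matrix.mulVec_mulVec, hQtu,
    Matrix.mulVec_smul]
  rw [smul_add, smul_smul, smul_smul]
  have : lam * (1 / (lam * dR)) * dR = 1 := by
    field_simp
  rw [this, one_smul]
  abel
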